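/- For every t > 0, (1 − Φ(t))/φ(t) ≥ 2/(√(t^2 + 4) + t), where Φ and φ are respectively the cumulative distribution function and the probability density function of the standard normal distribution. -/

import Mathlib

open MeasureTheory Real

/-- `φ`, the standard normal density. -/
noncomputable def stdNormalPDF (s : ℝ) : ℝ := (2 * π) ^ (-(1 : ℝ) / 2) * Real.exp (-s ^ 2 / 2)

/-- `Φ(t) = ∫_{-∞}^t φ(s) ds`, the standard normal cumulative distribution function. -/
noncomputable def stdNormalCDF (t : ℝ) : ℝ := ∫ s in Set.Iic t, stdNormalPDF s

noncomputable def birnG (s : ℝ) : ℝ := (Real.sqrt (s ^ 2 + 4) - s) / 2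

lemma sqrt4_pos (s : ℝ) : 0 < Real.sqrt (s ^ 2 + 4) := Real.sqrt_pos.2 (by positivity)

lemma sqrt4_sq (s : ℝ) : (Real.sqrt (s ^ 2 + 4)) ^ 2 = s ^ 2 + 4 :=
  Real.sq_sqrt (by positivity)

lemma le_sqrt4 (s : ℝ) : s ≤ Real.sqrt (s ^ 2 + 4) := by
  rcases le_or_gt s 0 with h | h
  · exact h.trans (sqrt4_pos s).le
  · nlinarith [sqrt4_sq s, sqrt4_pos s]

lemma pdf_pos (s : ℝ) : 0 < stdNormalPDF s := by
  unfold stdNormalPDF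
  positivity

lemma hasDerivAt_pdf (s : ℝ) : HasDerivAt stdNormalPDF (-s * stdNormalPDF s) s := by
  have h1 : HasDerivAt (fun x : ℝ => -x ^ 2 / 2) (-s) s := by
    have := ((hasDerivAt_pow 2 s).neg).div_const 2
    refine this.congr_deriv ?_
    ring
  have h2 := (h1.exp).const_mul ((2 * π) ^ (-(1 : ℝ) / 2))
  refine h2.congr_deriv ?_
  unfold stdNormalPDF
  ring

lemma hasDerivAt_sqrt4 (s : ℝ) :
    HasDerivAt (fun x : ℝ => Real.sqrt (x ^ 2 + 4)) (s / Real.sqrt (s ^ 2 + 4)) s := by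
  have h1 : HasDerivAt (fun x : ℝ => x ^ 2 + 4) (2 * s) s := by
    simpa using (hasDerivAt_pow 2 s).add_const 4
  have := (Real.hasDerivAt_sqrt (by positivity : (s:ℝ) ^ 2 + 4 ≠ 0)).comp s h1
  refine this.congr_deriv ?_
  field_simp

noncomputable def birnD (s : ℝ) : ℝ :=
  stdNormalPDF s * (s * birnG s - (s / Real.sqrt (s ^ 2 + 4) - 1) / 2)

lemma hasDerivAt_birnH (s : ℝ) :
    HasDerivAt (fun x => -(stdNormalPDF x * birnG x)) (birnD s) s := by
  have hg : HasDerivAt birnG ((s / Real.sqrt (s ^ 2 + 4) - 1) / 2) s := by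
    exact ((hasDerivAt_sqrt4 s).sub (hasDerivAt_id s)).div_const 2
  have := ((hasDerivAt_pdf s).mul hg).neg
  refine this.congr_deriv ?_
  unfold birnD
  ring

lemma birnD_bounds {s : ℝ} (hs : 0 ≤ s) : 0 ≤ birnD s ∧ birnD s ≤ stdNormalPDF s := by
  set r := Real.sqrt (s ^ 2 + 4) with hrdef
  have hr : 0 < r := sqrt4_pos s
  have hr2 : r ^ 2 = s ^ 2 + 4 := sqrt4_sq s
  have hsr : s ≤ r := le_sqrt4 s
  have hfac : s * birnG s - (s / r - 1) / 2 = (r - s) * (s * r + 1) / (2 * r) := by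
    unfold birnG
    rw [← hrdef]
    field_simp
    ring
  have hb1 : (0:ℝ) ≤ s * r + 1 := by nlinarith [mul_nonneg hs hr.le]
  have h0 : 0 ≤ (r - s) * (s * r + 1) / (2 * r) :=
    div_nonneg (mul_nonneg (sub_nonneg.2 hsr) hb1) (by positivity)
  have h1 : (r - s) * (s * r + 1) / (2 * r) ≤ 1 := by
    rw [div_le_one (by positivity)]
    have key : (r * (1 + s ^ 2)) ^ 2 = (s * (s ^ 2 + 3)) ^ 2 + 4 := by
      linear_combination (1 + s ^ 2) ^ 2 * hr2
    have ha : (0:ℝ) < r * (1 + s ^ 2) := by positivity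
    have hb : (0:ℝ) ≤ s * (s ^ 2 + 3) := by positivity
    have hab : s * (s ^ 2 + 3) ≤ r * (1 + s ^ 2) := by nlinarith [key, ha, hb]
    have hsr2 : s * r ^ 2 = s ^ 3 + 4 * s := by linear_combination s * hr2
    nlinarith [hab, hsr2]
  constructor
  · unfold birnD; rw [hfac]; exact mul_nonneg (pdf_pos s).le h0
  · unfold birnD
    rw [hfac]
    calc stdNormalPDF s * ((r - s) * (s * r + 1) / (2 * r)) ≤ stdNormalPDF s * 1 :=
      mul_le_mul_of_nonneg_left h1 (pdf_pos s).le
    _ = stdNormalPDF s := mul_one _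

lemma pdf_eq : stdNormalPDF = fun x => (2 * π) ^ (-(1:ℝ)/2) * Real.exp (-(1/2) * x ^ 2) := by
  funext x
  unfold stdNormalPDF
  congr 1
  ring

lemma integrable_pdf : Integrable stdNormalPDF := by
  rw [pdf_eq]
  exact (integrable_exp_neg_mul_sq (by norm_num : (0:ℝ) < 1/2)).const_mul _

lemma integral_pdf : ∫ s, stdNormalPDF s = 1 := by
  rw [pdf_eq, MeasureTheory.integral_const_mul, integral_gaussian]
  have h2 : π / (1/2 : ℝ) = 2 * π := by ring
  rw [h2, Real.sqrt_eq_rpow, ← Real.rpow_add (by positivity)]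
  norm_num

lemma tail_eq (t : ℝ) : 1 - stdNormalCDF t = ∫ s in Set.Ioi t, stdNormalPDF s := by
  have h := intervalIntegral.integral_Iic_add_Ioi (b := t)
    integrable_pdf.integrableOn integrable_pdf.integrableOn
  rw [integral_pdf] at h
  unfold stdNormalCDF
  linarith

lemma continuous_birnD : Continuous birnD := by
  have hs : Continuous fun s : ℝ => Real.sqrt (s ^ 2 + 4) :=
    (continuous_pow 2 |>.add continuous_const).sqrt
  have hpdf : Continuous stdNormalPDF := by
    unfold stdNormalPDF
    continuity
  unfold birnD birnG
  refine hpdf.mul ?_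
  refine ((continuous_id.mul ((hs.sub continuous_id).div_const 2)).sub ?_)
  refine ((continuous_id.div hs fun x => (sqrt4_pos x).ne').sub continuous_const).div_const 2

lemma tendsto_birnH (t : ℝ) :
    Filter.Tendsto (fun x => -(stdNormalPDF x * birnG x)) Filter.atTop (nhds 0) := by
  have hpdf : Filter.Tendsto stdNormalPDF Filter.atTop (nhds 0) := by
    rw [pdf_eq]
    rw [show (0:ℝ) = (2 * π) ^ (-(1:ℝ)/2) * 0 by ring]
    refine Filter.Tendsto.const_mul _ ?_
    refine Real.tendsto_exp_atBot.comp ?_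
    have h1 : Filter.Tendsto (fun x : ℝ => x ^ 2) Filter.atTop Filter.atTop :=
      Filter.tendsto_pow_atTop (by norm_num)
    exact h1.const_mul_atTop_of_neg (by norm_num : -(1/2 : ℝ) < 0)
  have hG : ∀ x : ℝ, 0 ≤ x → 0 ≤ birnG x ∧ birnG x ≤ 1 := by
    intro x hx
    have h1 := le_sqrt4 x
    have h2 : Real.sqrt (x ^ 2 + 4) ≤ x + 2 := by
      have := Real.sqrt_le_sqrt (show x ^ 2 + 4 ≤ (x + 2) ^ 2 by nlinarith)
      rwa [Real.sqrt_sq (by linarith)] at this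
    unfold birnG
    constructor <;> [linarith; linarith]
  have hneg : Filter.Tendsto (fun x => -stdNormalPDF x) Filter.atTop (nhds 0) := by
    simpa using hpdf.neg
  refine tendsto_of_tendsto_of_tendsto_of_le_of_le' hneg
    (tendsto_const_nhds (x := (0:ℝ))) ?_ ?_ <;>
  · filter_upwards [Filter.eventually_ge_atTop (0:ℝ)] with x hx
    have hp := (pdf_pos x).le
    have h1 := (hG x hx).1
    have h2 := (hG x hx).2
    nlinarith

/-- **Lemma 4** (Birnbaum (1942)): for every `t > 0`,
`(1 − Φ(t))/φ(t) ≥ 2/(√(t² + 4) + t)`. -/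
theorem statement10 (t : ℝ) (ht : 0 < t) :
    2 / (Real.sqrt (t ^ 2 + 4) + t) ≤ (1 - stdNormalCDF t) / stdNormalPDF t := by
  have hφt := pdf_pos t
  have hDint : IntegrableOn birnD (Set.Ioi t) := by
    refine MeasureTheory.Integrable.mono integrable_pdf.integrableOn
      continuous_birnD.aestronglyMeasurable.restrict ?_
    rw [ae_restrict_iff' measurableSet_Ioi]
    filter_upwards with x hx
    have hb := birnD_bounds (le_of_lt (ht.trans hx))
    rw [Real.norm_eq_abs, Real.norm_eq_abs, abs_of_nonneg hb.1,
      abs_of_nonneg (pdf_pos x).le]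
    exact hb.2
  have hFTC : ∫ s in Set.Ioi t, birnD s = stdNormalPDF t * birnG t := by
    have h := MeasureTheory.integral_Ioi_of_hasDerivAt_of_tendsto' (a := t)
      (f := fun x => -(stdNormalPDF x * birnG x)) (f' := birnD)
      (fun x _ => hasDerivAt_birnH x) hDint (tendsto_birnH t)
    rw [h]; ring
  have hmono : ∫ s in Set.Ioi t, birnD s ≤ ∫ s in Set.Ioi t, stdNormalPDF s :=
    MeasureTheory.setIntegral_mono_on hDint integrable_pdf.integrableOn
      measurableSet_Ioi (fun x hx => (birnD_bounds (le_of_lt (ht.trans hx))).2)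
  have key : stdNormalPDF t * birnG t ≤ 1 - stdNormalCDF t := by
    rw [tail_eq, ← hFTC]; exact hmono
  have hsum : 0 < Real.sqrt (t ^ 2 + 4) + t := by positivity
  have hGeq : birnG t = 2 / (Real.sqrt (t ^ 2 + 4) + t) := by
    unfold birnG
    rw [eq_div_iff hsum.ne']
    nlinarith [sqrt4_sq t]
  rw [le_div_iff₀ hφt, ← hGeq]
  linarith [key, mul_comm (stdNormalPDF t) (birnG t)]
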